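/- Let S be a set and consider ℓ∞(S, ℝ) with the pointwise order. For a function z ∈ ℓ∞(S, ℝ) with 0 ≤ z ≤ 1 and z ≠ 0, the order interval [0, z] = {x : 0 ≤ x ≤ z} is totally ordered if and only if z is a positive multiple of the indicator function of a singleton {s} for some s ∈ S. -/
import Mathlib


/-- In `ℓ∞(S, ℝ)` with the pointwise order, for `0 ≤ z ≤ 1`, `z ≠ 0`,
the order interval `[0, z]` is totally ordered iff `z` is a positive multiple of the
indicator function of a singleton. -/
theorem stmt_12 {S : Type*} (z : S → ℝ)
    (h0 : 0 ≤ z) (h1 : z ≤ 1) (hz : z ≠ 0) :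
    IsChain (· ≤ ·) {x : S → ℝ | 0 ≤ x ∧ x ≤ z} ↔
      ∃ (s : S) (c : ℝ), 0 < c ∧
        z = c • Set.indicator ({s} : Set S) (fun _ => (1 : ℝ)) := by
  constructor
  · intro hch
    obtain ⟨s, hs⟩ : ∃ s, z s ≠ 0 := by
      by_contra h; push_neg at h; exact hz (funext fun s => h s)
    have hspos : 0 < z s := lt_of_le_of_ne (h0 s) (Ne.symm hs)
    refine ⟨s, z s, hspos, ?_⟩
    funext t
    by_cases hts : t = s
    · subst hts; simp
    · simp only [Pi.smul_apply, Set.indicator, Set.mem_singleton_iff, hts, if_false,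
        smul_zero]
      by_contra hzt
      have htpos : 0 < z t := lt_of_le_of_ne (h0 t) (Ne.symm hzt)
      set x : S → ℝ := Set.indicator ({s} : Set S) (fun _ => z s) with hxdef
      set y : S → ℝ := Set.indicator ({t} : Set S) (fun _ => z t) with hydef
      have hx : x ∈ {x : S → ℝ | 0 ≤ x ∧ x ≤ z} := by
        constructor
        · intro u
          simp only [hxdef, Set.indicator, Set.mem_singleton_iff, Pi.zero_apply]
          split <;> [exact hspos.le; exact le_refl 0]
        · intro u
          simp only [hxdef, Set.indicator, Set.mem_singleton_iff]
          split
          · next h => subst h; exact le_refl _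
          · exact h0 u
      have hy : y ∈ {x : S → ℝ | 0 ≤ x ∧ x ≤ z} := by
        constructor
        · intro u
          simp only [hydef, Set.indicator, Set.mem_singleton_iff, Pi.zero_apply]
          split <;> [exact htpos.le; exact le_refl 0]
        · intro u
          simp only [hydef, Set.indicator, Set.mem_singleton_iff]
          split
          · next h => subst h; exact le_refl _
          · exact h0 u
      have hxy : x ≠ y := by
        intro h
        have := congrFun h s
        simp [hxdef, hydef, Set.indicator, Ne.symm hts] at this
        exact hs this
      rcases hch hx hy hxy with h | h
      · have := h s
        simp [hxdef, hydef, Set.indicator, Ne.symm hts] at this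
        exact absurd this (not_le.mpr hspos)
      · have := h t
        simp [hxdef, hydef, Set.indicator, hts] at this
        exact absurd this (not_le.mpr htpos)
  · rintro ⟨s, c, hc, rfl⟩
    intro x hx y hy hxy
    have hzero : ∀ u, u ≠ s → x u = 0 ∧ y u = 0 := by
      intro u hu
      constructor
      · refine le_antisymm ?_ (hx.1 u)
        have := hx.2 u
        simpa [Set.indicator, hu] using this
      · refine le_antisymm ?_ (hy.1 u)
        have := hy.2 u
        simpa [Set.indicator, hu] using this
    rcases le_total (x s) (y s) with h | h
    · left
      intro u
      by_cases hu : u = s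
      · subst hu; exact h
      · rw [(hzero u hu).1, (hzero u hu).2]
    · right
      intro u
      by_cases hu : u = s
      · subst hu; exact h
      · rw [(hzero u hu).1, (hzero u hu).2]
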